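/- Let l : E × ℝ≥0 → ℝ be bounded by C_l and satisfy |l(ξ,u) − l(ξ',u)| ≤ [l]₁ d(ξ,ξ') for all admissible u, where ξ = (x,t) ranges over Ẽ = E × ℝ≥0 with metric d((x,t),(x',t')) = |x−x'| + |t−t'|, and the time coordinate evolves linearly: l evaluated along the flow at time u from (x,t) has time coordinate t+u. Define the truncated cost l̃((x,t),u) = l((x,t),u)·1_{t+u ≤ t_f}. Then for all ξ = (x,t), ξ' = (x',t') ∈ Ẽ and s ≥ 0 with s ≤ t̃*(ξ) ∧ t̃*(ξ') ≤ C_{t*}: ∫₀ˢ |l̃(ξ,u) − l̃(ξ',u)| du ≤ (C_{t*}[l]₁ + C_l)·d(ξ, ξ'). -/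

import Mathlib

open MeasureTheory

theorem stmt14 {E : Type*} [MetricSpace E] (tf Ct Cl Kl : ℝ)
    (tstar : E × ℝ → ℝ) (htnn : ∀ ξ, 0 ≤ tstar ξ) (htbd : ∀ ξ, tstar ξ ≤ Ct)
    (l : E × ℝ → ℝ → ℝ)
    (hlbd : ∀ ξ u, |l ξ u| ≤ Cl)
    (hlLip : ∀ (ξ ξ' : E × ℝ) (u : ℝ), 0 ≤ u → u ≤ min (tstar ξ) (tstar ξ') →
      |l ξ u - l ξ' u| ≤ Kl * (dist ξ.1 ξ'.1 + |ξ.2 - ξ'.2|)) :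
    ∀ (ξ ξ' : E × ℝ) (s : ℝ), 0 ≤ s → s ≤ min (tstar ξ) (tstar ξ') →
      (∫ u in (0:ℝ)..s,
        |l ξ u * (if ξ.2 + u ≤ tf then (1:ℝ) else 0)
          - l ξ' u * (if ξ'.2 + u ≤ tf then (1:ℝ) else 0)|)
      ≤ (Ct * Kl + Cl) * (dist ξ.1 ξ'.1 + |ξ.2 - ξ'.2|) := by
  intro ξ ξ' s hs hsle
  set D : ℝ := dist ξ.1 ξ'.1 + |ξ.2 - ξ'.2| with hDdef
  have hD0 : 0 ≤ D := add_nonneg dist_nonneg (abs_nonneg _)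
  have hCl : 0 ≤ Cl := le_trans (abs_nonneg _) (hlbd ξ 0)
  have hKl : 0 ≤ Kl := by
    have h := hlLip ξ (ξ.1, ξ.2 + 1) 0 le_rfl
      (le_min (htnn ξ) (htnn (ξ.1, ξ.2 + 1)))
    simp at h
    nlinarith [abs_nonneg (l ξ 0 - l (ξ.1, ξ.2 + 1) 0)]
  have hCt : 0 ≤ Ct := le_trans (htnn ξ) (htbd ξ)
  have hsCt : s ≤ Ct := le_trans hsle (le_trans (min_le_left _ _) (htbd ξ))
  set t : ℝ := ξ.2 with ht
  set t' : ℝ := ξ'.2 with ht'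
  set a : ℝ := tf - max t t' with ha
  set b : ℝ := tf - min t t' with hb
  have hab : a ≤ b := by
    simp only [ha, hb]
    have := min_le_max (a := t) (b := t')
    linarith
  set ind : ℝ → ℝ := Set.indicator (Set.Ioc a b) (fun _ => (1:ℝ)) with hind
  -- the bounding function
  set B : ℝ → ℝ := fun u => Kl * D + Cl * ind u with hB
  have hindint : IntervalIntegrable ind volume 0 s := by
    have : Integrable ind volume := by
      rw [hind, integrable_indicator_iff measurableSet_Ioc]
      exact (integrableOn_const_iff (C := (1:ℝ))).mpr (Or.inr (by simp [Real.volume_Ioc]))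
    exact this.intervalIntegrable
  have hBint : IntervalIntegrable B volume 0 s :=
    (intervalIntegrable_const).add (hindint.const_mul Cl)
  -- pointwise bound
  have hpt : ∀ u ∈ Set.Icc (0:ℝ) s,
      |l ξ u * (if ξ.2 + u ≤ tf then (1:ℝ) else 0)
        - l ξ' u * (if ξ'.2 + u ≤ tf then (1:ℝ) else 0)| ≤ B u := by
    intro u hu
    set c1 : ℝ := if ξ.2 + u ≤ tf then (1:ℝ) else 0 with hc1
    set c2 : ℝ := if ξ'.2 + u ≤ tf then (1:ℝ) else 0 with hc2
    have hkey : l ξ u * c1 - l ξ' u * c2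
        = (l ξ u - l ξ' u) * c2 + l ξ u * (c1 - c2) := by ring
    have h1 : |(l ξ u - l ξ' u) * c2| ≤ Kl * D := by
      rw [abs_mul]
      have hc2b : |c2| ≤ 1 := by
        rw [hc2]; split <;> simp
      have hl := hlLip ξ ξ' u hu.1 (le_trans hu.2 hsle)
      calc |l ξ u - l ξ' u| * |c2| ≤ (Kl * D) * 1 :=
            mul_le_mul hl hc2b (abs_nonneg _) (by positivity)
        _ = Kl * D := by ring
    have h2 : |l ξ u * (c1 - c2)| ≤ Cl * ind u := by
      rw [abs_mul]
      by_cases hA : ξ.2 + u ≤ tf <;> by_cases hA' : ξ'.2 + u ≤ tf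
      · simp only [hc1, hc2, if_pos hA, if_pos hA', sub_self, mul_zero, abs_zero]
        exact mul_nonneg hCl (Set.indicator_nonneg (fun _ _ => zero_le_one) u)
      · have hmem : u ∈ Set.Ioc a b := by
          constructor
          · simp only [ha]
            have : tf - t' < u := by rw [ht']; linarith
            have h2 : tf - max t t' ≤ tf - t' := by
              have := le_max_right t t'; linarith
            linarith
          · simp only [hb]
            have : u ≤ tf - t := by rw [ht]; linarith
            have h2 : tf - t ≤ tf - min t t' := by
              have := min_le_left t t'; linarith
            linarith
        have : ind u = 1 := by simp [hind, Set.indicator_of_mem hmem]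
        rw [this, hc1, hc2, if_pos hA, if_neg hA']
        simpa using hlbd ξ u
      · have hmem : u ∈ Set.Ioc a b := by
          constructor
          · simp only [ha]
            have : tf - t < u := by rw [ht]; linarith
            have h2 : tf - max t t' ≤ tf - t := by
              have := le_max_left t t'; linarith
            linarith
          · simp only [hb]
            have : u ≤ tf - t' := by rw [ht']; linarith
            have h2 : tf - t' ≤ tf - min t t' := by
              have := min_le_right t t'; linarith
            linarith
        have : ind u = 1 := by simp [hind, Set.indicator_of_mem hmem]
        rw [this, hc1, hc2, if_neg hA, if_pos hA']
        simpa using hlbd ξ u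
      · simp only [hc1, hc2, if_neg hA, if_neg hA', sub_self, mul_zero, abs_zero]
        exact mul_nonneg hCl (Set.indicator_nonneg (fun _ _ => zero_le_one) u)
    calc |l ξ u * c1 - l ξ' u * c2|
        ≤ |(l ξ u - l ξ' u) * c2| + |l ξ u * (c1 - c2)| := by
          rw [hkey]; exact abs_add_le _ _
      _ ≤ Kl * D + Cl * ind u := add_le_add h1 h2
      _ = B u := rfl
  -- main integral comparison
  by_cases hfint : IntervalIntegrable
      (fun u => |l ξ u * (if ξ.2 + u ≤ tf then (1:ℝ) else 0)
        - l ξ' u * (if ξ'.2 + u ≤ tf then (1:ℝ) else 0)|) volume 0 s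
  · have hmono := intervalIntegral.integral_mono_on hs hfint hBint hpt
    -- compute ∫ B
    have hBval : (∫ u in (0:ℝ)..s, B u)
        = s * (Kl * D) + Cl * ∫ u in (0:ℝ)..s, ind u := by
      rw [hB]
      rw [intervalIntegral.integral_add intervalIntegrable_const (hindint.const_mul Cl),
        intervalIntegral.integral_const, intervalIntegral.integral_const_mul]
      simp [smul_eq_mul]
    -- bound ∫ ind
    have hindval : (∫ u in (0:ℝ)..s, ind u) ≤ |t - t'| := by
      rw [intervalIntegral.integral_of_le hs, hind,
        setIntegral_indicator measurableSet_Ioc, setIntegral_const]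
      simp only [smul_eq_mul, mul_one]
      have hmono' : volume (Set.Ioc 0 s ∩ Set.Ioc a b) ≤ volume (Set.Ioc a b) :=
        measure_mono Set.inter_subset_right
      have hfin : volume (Set.Ioc a b) < ⊤ := by
        simp [Real.volume_Ioc]
      have := ENNReal.toReal_mono hfin.ne hmono'
      refine le_trans this ?_
      rw [Real.volume_Ioc, ENNReal.toReal_ofReal (by linarith)]
      have : b - a = max t t' - min t t' := by rw [ha, hb]; ring
      rw [this, max_sub_min_eq_abs]
      exact (abs_sub_comm t' t).le
    have hindnn : (0:ℝ) ≤ ∫ u in (0:ℝ)..s, ind u := by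
      apply intervalIntegral.integral_nonneg hs
      intro u _
      exact Set.indicator_nonneg (fun _ _ => zero_le_one) u
    have habs : |t - t'| ≤ D := le_add_of_nonneg_left dist_nonneg
    calc (∫ u in (0:ℝ)..s,
        |l ξ u * (if ξ.2 + u ≤ tf then (1:ℝ) else 0)
          - l ξ' u * (if ξ'.2 + u ≤ tf then (1:ℝ) else 0)|)
        ≤ s * (Kl * D) + Cl * ∫ u in (0:ℝ)..s, ind u := by rw [← hBval]; exact hmono
      _ ≤ Ct * (Kl * D) + Cl * D := by
          have h1 : s * (Kl * D) ≤ Ct * (Kl * D) :=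
            mul_le_mul_of_nonneg_right hsCt (by positivity)
          have h2 : Cl * (∫ u in (0:ℝ)..s, ind u) ≤ Cl * D :=
            mul_le_mul_of_nonneg_left (le_trans hindval habs) hCl
          linarith
      _ = (Ct * Kl + Cl) * D := by ring
  · rw [intervalIntegral.integral_undef hfint]
    positivity
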